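/- Let (K, V) be a pair of real random variables such that (K, V) has the same joint distribution as (K, −V), such that K − |V| > 0 almost surely, and such that log(K + V) is integrable. Then E[log(K + V)] ≤ E[log K]. -/

import Mathlib

open MeasureTheory

theorem stmt_10 {Ω : Type*} [MeasurableSpace Ω] (μ : Measure Ω) [IsProbabilityMeasure μ]
    (K V : Ω → ℝ) (hK : Measurable K) (hV : Measurable V)
    (hsym : μ.map (fun ω => (K ω, V ω)) = μ.map (fun ω => (K ω, -V ω)))
    (hpos : ∀ᵐ ω ∂μ, 0 < K ω - |V ω|)
    (hint : Integrable (fun ω => Real.log (K ω + V ω)) μ) :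
    ∫ ω, Real.log (K ω + V ω) ∂μ ≤ ∫ ω, Real.log (K ω) ∂μ := by
  have hf : Measurable (fun p : ℝ × ℝ => Real.log (p.1 + p.2)) :=
    (measurable_fst.add measurable_snd).log
  have hg1 : Measurable (fun ω => (K ω, V ω)) := hK.prodMk hV
  have hg2 : Measurable (fun ω => (K ω, -V ω)) := hK.prodMk hV.neg
  -- integral equality via symmetry
  have heq : ∫ ω, Real.log (K ω + V ω) ∂μ = ∫ ω, Real.log (K ω - V ω) ∂μ := by
    have h1 : ∫ ω, Real.log (K ω + V ω) ∂μ
        = ∫ p, Real.log (p.1 + p.2) ∂(μ.map (fun ω => (K ω, V ω))) := by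
      rw [integral_map hg1.aemeasurable hf.aestronglyMeasurable]
    have h2 : ∫ p, Real.log (p.1 + p.2) ∂(μ.map (fun ω => (K ω, -V ω)))
        = ∫ ω, Real.log (K ω - V ω) ∂μ := by
      rw [integral_map hg2.aemeasurable hf.aestronglyMeasurable]
      simp [sub_eq_add_neg]
    rw [h1, hsym, h2]
  -- integrability of log (K - V)
  have hint2 : Integrable (fun ω => Real.log (K ω - V ω)) μ := by
    have h1 : Integrable (fun p : ℝ × ℝ => Real.log (p.1 + p.2))
        (μ.map (fun ω => (K ω, V ω))) := by
      rw [integrable_map_measure hf.aestronglyMeasurable hg1.aemeasurable]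
      exact hint
    rw [hsym, integrable_map_measure hf.aestronglyMeasurable hg2.aemeasurable] at h1
    simpa [sub_eq_add_neg, Function.comp_def] using h1
  -- integrability of log K
  have hintK : Integrable (fun ω => Real.log (K ω)) μ := by
    apply Integrable.mono' (hint.abs.add hint2.abs)
      (hK.log.aestronglyMeasurable)
    filter_upwards [hpos] with ω h
    have habs := abs_nonneg (V ω)
    have hKpos : 0 < K ω := lt_of_le_of_lt habs (by linarith)
    have h1 : 0 < K ω + V ω := by
      cases abs_cases (V ω) with
      | inl h' => linarith [h'.1]
      | inr h' => linarith [h'.1]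
    have h2 : 0 < K ω - V ω := by
      cases abs_cases (V ω) with
      | inl h' => linarith [h'.1]
      | inr h' => linarith [h'.1]
    have hle : K ω ≤ max (K ω + V ω) (K ω - V ω) := by
      cases le_or_gt 0 (V ω) with
      | inl h' => exact le_max_of_le_left (by linarith)
      | inr h' => exact le_max_of_le_right (by linarith)
    have hge : min (K ω + V ω) (K ω - V ω) ≤ K ω := by
      cases le_or_gt 0 (V ω) with
      | inl h' => exact min_le_of_right_le (by linarith)
      | inr h' => exact min_le_of_left_le (by linarith)
    have hub : Real.log (K ω) ≤ max (Real.log (K ω + V ω)) (Real.log (K ω - V ω)) := by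
      cases le_total 0 (V ω) with
      | inl h' => exact le_max_of_le_left (Real.log_le_log hKpos (by linarith))
      | inr h' => exact le_max_of_le_right (Real.log_le_log hKpos (by linarith))
    have hlb : min (Real.log (K ω + V ω)) (Real.log (K ω - V ω)) ≤ Real.log (K ω) := by
      cases le_total 0 (V ω) with
      | inl h' => exact min_le_of_right_le (Real.log_le_log h2 (by linarith))
      | inr h' => exact min_le_of_left_le (Real.log_le_log h1 (by linarith))
    simp only [Pi.add_apply]
    rw [Real.norm_eq_abs, abs_le]
    constructor
    · have h3 : -(|Real.log (K ω + V ω)| + |Real.log (K ω - V ω)|)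
          ≤ min (Real.log (K ω + V ω)) (Real.log (K ω - V ω)) := by
        rcases min_cases (Real.log (K ω + V ω)) (Real.log (K ω - V ω)) with ⟨he, _⟩ | ⟨he, _⟩ <;>
          rw [he] <;> [linarith [abs_nonneg (Real.log (K ω - V ω)), neg_abs_le (Real.log (K ω + V ω))];
            linarith [abs_nonneg (Real.log (K ω + V ω)), neg_abs_le (Real.log (K ω - V ω))]]
      linarith
    · have h3 : max (Real.log (K ω + V ω)) (Real.log (K ω - V ω))
          ≤ |Real.log (K ω + V ω)| + |Real.log (K ω - V ω)| := by
        apply max_le <;>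
          [linarith [abs_nonneg (Real.log (K ω - V ω)), le_abs_self (Real.log (K ω + V ω))];
            linarith [abs_nonneg (Real.log (K ω + V ω)), le_abs_self (Real.log (K ω - V ω))]]
      linarith
  -- pointwise inequality
  have hae : ∀ᵐ ω ∂μ, Real.log (K ω + V ω) + Real.log (K ω - V ω) ≤ 2 * Real.log (K ω) := by
    filter_upwards [hpos] with ω h
    have habs := abs_nonneg (V ω)
    have hKpos : 0 < K ω := lt_of_le_of_lt habs (by linarith)
    have h1 : 0 < K ω + V ω := by
      cases abs_cases (V ω) with
      | inl h' => linarith [h'.1]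
      | inr h' => linarith [h'.1]
    have h2 : 0 < K ω - V ω := by
      cases abs_cases (V ω) with
      | inl h' => linarith [h'.1]
      | inr h' => linarith [h'.1]
    have hm : (K ω + V ω) * (K ω - V ω) ≤ K ω * K ω := by nlinarith [sq_nonneg (V ω)]
    calc Real.log (K ω + V ω) + Real.log (K ω - V ω)
        = Real.log ((K ω + V ω) * (K ω - V ω)) := (Real.log_mul h1.ne' h2.ne').symm
      _ ≤ Real.log (K ω * K ω) := Real.log_le_log (by positivity) hm
      _ = 2 * Real.log (K ω) := by rw [Real.log_mul hKpos.ne' hKpos.ne']; ring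
  have hmono : ∫ ω, (Real.log (K ω + V ω) + Real.log (K ω - V ω)) ∂μ
      ≤ ∫ ω, 2 * Real.log (K ω) ∂μ :=
    integral_mono_ae (hint.add hint2) (hintK.const_mul 2) hae
  rw [integral_add hint hint2, integral_const_mul] at hmono
  linarith [heq ▸ hmono]
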